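/- arXiv:2110.02310 — 2 statements merged into one kernel-verified Lean document; each statement's English description precedes it below -/
import Mathlib

section
/- Let T be a C₀-semigroup on L_p(μ), 1 < p < ∞, with T(s) ≥ 0 for all s ≥ t₀. Fix f ∈ L_p(μ)₊ and set g := (∫_{t₀}^{t₀+1} (T(t) f)^p dt)^{1/p} ∈ L_p(μ). Then for every s ≥ t₀ and every nonnegative h ∈ L_{p'}(ℝ) with ‖h‖_{p'} ≤ 1, one has ∫_{s+t₀}^{s+t₀+1} h(t) T(t) f dt ≤ T(s) g in the lattice order of L_p(μ). -/
open MeasureTheory ENNReal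

/-- `T` is a `C₀`-semigroup: `T 0 = I`, the semigroup law holds for nonnegative times,
and the orbit maps are strongly continuous on `[0, ∞)`. -/
def IsC0Semigroup {X : Type*} [NormedAddCommGroup X] [NormedSpace ℝ X]
    (T : ℝ → X →L[ℝ] X) : Prop :=
  T 0 = ContinuousLinearMap.id ℝ X ∧
  (∀ s t : ℝ, 0 ≤ s → 0 ≤ t → T (s + t) = (T s).comp (T t)) ∧
  ∀ f : X, ContinuousOn (fun t => T t f) (Set.Ici 0)

section Aux
variable {Ω : Type*} [MeasurableSpace Ω] {μ : Measure Ω} {p : ℝ≥0∞} [Fact (1 ≤ p)]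

lemma aux_integrableOn (w : Lp ℝ p μ) {A : Set Ω} (hμA : μ A < ∞) :
    IntegrableOn (w : Ω → ℝ) A μ := by
  haveI : IsFiniteMeasure (μ.restrict A) := ⟨by rwa [Measure.restrict_apply_univ]⟩
  exact ((Lp.memLp w).restrict A).integrable Fact.out

lemma aux_setIntegral_norm_le (hp' : p ≠ ⊤) (w : Lp ℝ p μ) {A : Set Ω} (hμA : μ A < ∞) :
    ∫ x in A, ‖(w : Ω → ℝ) x‖ ∂μ ≤ ‖w‖ * ((μ A) ^ (1 - 1 / p.toReal)).toReal := by
  have hint : Integrable (w : Ω → ℝ) (μ.restrict A) := aux_integrableOn w hμA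
  have h1 : ENNReal.ofReal (∫ x in A, ‖(w : Ω → ℝ) x‖ ∂μ)
      = ∫⁻ x in A, ‖(w : Ω → ℝ) x‖₊ ∂μ := ofReal_integral_norm_eq_lintegral_enorm hint
  have h2 : eLpNorm (w : Ω → ℝ) 1 (μ.restrict A)
      ≤ eLpNorm (w : Ω → ℝ) p (μ.restrict A) * (μ.restrict A Set.univ) ^ (1 / (1:ℝ≥0∞).toReal - 1 / p.toReal) :=
    eLpNorm_le_eLpNorm_mul_rpow_measure_univ (Fact.out : (1:ℝ≥0∞) ≤ p)
      (Lp.aestronglyMeasurable w).restrict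
  rw [eLpNorm_one_eq_lintegral_enorm, Measure.restrict_apply_univ] at h2
  have h3 : eLpNorm (w : Ω → ℝ) p (μ.restrict A) ≤ eLpNorm (w : Ω → ℝ) p μ :=
    eLpNorm_mono_measure _ Measure.restrict_le_self
  have hexp : (0:ℝ) ≤ 1 - 1 / p.toReal := by
    have h1p : (1:ℝ) ≤ p.toReal := by
      simpa using ENNReal.toReal_mono hp' (Fact.out : (1:ℝ≥0∞) ≤ p)
    have : 1 / p.toReal ≤ 1 := div_le_one_of_le₀ h1p (by positivity)
    linarith
  have hfin : eLpNorm (w : Ω → ℝ) p μ * (μ A) ^ (1 - 1 / p.toReal) ≠ ∞ :=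
    ENNReal.mul_ne_top (Lp.eLpNorm_ne_top w) (ENNReal.rpow_lt_top_of_nonneg hexp hμA.ne).ne
  have h4 : ENNReal.ofReal (∫ x in A, ‖(w : Ω → ℝ) x‖ ∂μ)
      ≤ eLpNorm (w : Ω → ℝ) p μ * (μ A) ^ (1 - 1 / p.toReal) := by
    rw [h1]
    refine le_trans ?_ (mul_le_mul_left h3 _)
    simp at h2
    rw [one_div]
    exact h2
  have := ENNReal.toReal_mono hfin h4
  rw [ENNReal.toReal_ofReal (integral_nonneg (fun x => norm_nonneg _))] at this
  rwa [ENNReal.toReal_mul, ← Lp.norm_def] at this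

lemma aux_exists_CLM (hp' : p ≠ ⊤) {A : Set Ω} (hμA : μ A < ∞) :
    ∃ L : Lp ℝ p μ →L[ℝ] ℝ, ∀ w : Lp ℝ p μ, L w = ∫ x in A, w x ∂μ := by
  refine ⟨LinearMap.mkContinuous
    { toFun := fun w => ∫ x in A, (w : Ω → ℝ) x ∂μ
      map_add' := fun w₁ w₂ => by
        show ∫ x in A, ((w₁ + w₂ : Lp ℝ p μ) : Ω → ℝ) x ∂μ = _
        rw [integral_congr_ae (ae_restrict_of_ae (Lp.coeFn_add w₁ w₂))]
        exact integral_add (aux_integrableOn w₁ hμA) (aux_integrableOn w₂ hμA)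
      map_smul' := fun c w => by
        show ∫ x in A, ((c • w : Lp ℝ p μ) : Ω → ℝ) x ∂μ = _
        rw [integral_congr_ae (ae_restrict_of_ae (Lp.coeFn_smul c w))]
        simpa using integral_smul c (w : Ω → ℝ) }
    (((μ A) ^ (1 - 1 / p.toReal)).toReal) (fun w => ?_), fun w => rfl⟩
  calc ‖∫ x in A, (w : Ω → ℝ) x ∂μ‖ ≤ ∫ x in A, ‖(w : Ω → ℝ) x‖ ∂μ :=
        norm_integral_le_integral_norm _
    _ ≤ ‖w‖ * ((μ A) ^ (1 - 1 / p.toReal)).toReal := aux_setIntegral_norm_le hp' w hμA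
    _ = ((μ A) ^ (1 - 1 / p.toReal)).toReal * ‖w‖ := mul_comm _ _

end Aux

set_option maxHeartbeats 2000000 in
/-- Let `T` be a `C₀`-semigroup on `L_p(μ)` with `T(s) ≥ 0` for
`s ≥ t₀`, let `f ∈ L_p(μ)₊`, and let `g = (∫_{t₀}^{t₀+1} (T(t)f)^p dt)^{1/p} ∈ L_p(μ)`
(defined pointwise a.e. via a jointly measurable representative `F` of `t ↦ T(t)f`).
Then for every `s ≥ t₀` and every nonnegative `h ∈ L_{p'}(ℝ)` with `‖h‖_{p'} ≤ 1`,
`∫_{s+t₀}^{s+t₀+1} h(t) T(t) f dt ≤ T(s) g` in the lattice order of `L_p(μ)`. -/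
theorem stmt4 {Ω : Type*} [MeasurableSpace Ω] (μ : Measure Ω)
    {p q : ℝ≥0∞} [Fact (1 ≤ p)] (hp : 1 < p) (hp' : p ≠ ⊤) (hpq : 1 / p + 1 / q = 1)
    (T : ℝ → Lp ℝ p μ →L[ℝ] Lp ℝ p μ) (hT : IsC0Semigroup T)
    (t₀ : ℝ) (ht₀ : 0 ≤ t₀)
    (hpos : ∀ s : ℝ, t₀ ≤ s → ∀ u : Lp ℝ p μ, 0 ≤ u → 0 ≤ T s u)
    (f : Lp ℝ p μ) (hf : 0 ≤ f)
    (F : ℝ → Ω → ℝ) (hFmeas : Measurable (Function.uncurry F))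
    (hF : ∀ t : ℝ, (T t f : Ω → ℝ) =ᵐ[μ] F t)
    (g : Lp ℝ p μ)
    (hg : ∀ᵐ x ∂μ, (g : Ω → ℝ) x
      = (∫ t in Set.Icc t₀ (t₀ + 1), F t x ^ p.toReal) ^ (1 / p.toReal)) :
    ∀ s : ℝ, t₀ ≤ s → ∀ h : ℝ → ℝ, MemLp h q volume → (∀ t, 0 ≤ h t) →
      eLpNorm h q volume ≤ 1 →
      (∫ t in Set.Icc (s + t₀) (s + t₀ + 1), h t • T t f) ≤ T s g := by
  intro s hs h hmemh hh0 hhnorm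
  -- basic exponent facts
  have hp0 : p ≠ 0 := (zero_lt_one.trans hp).ne'
  have hconj : p.HolderConjugate q := ⟨by simpa [one_div] using hpq⟩
  have hq_top : q ≠ ⊤ := by
    intro hqt
    rw [hqt] at hpq
    simp only [one_div, ENNReal.inv_top, add_zero, ENNReal.inv_eq_one] at hpq
    exact hp.ne' hpq
  have hq1 : 1 ≤ q := hconj.symm.one_le
  have hq0 : q ≠ 0 := (zero_lt_one.trans_le hq1).ne'
  set pr := p.toReal with hpr_def
  set qr := q.toReal with hqr_def
  have hpr1 : 1 < pr := by
    have := (ENNReal.toReal_lt_toReal (by simp) hp').mpr hp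
    simpa using this
  have hqr1 : 1 ≤ qr := by
    have := ENNReal.toReal_mono hq_top hq1
    simpa using this
  have hqr0 : (0:ℝ) < qr := lt_of_lt_of_le zero_lt_one hqr1
  have hrconj : pr.HolderConjugate qr := by
    refine Real.holderConjugate_iff.mpr ⟨hpr1, ?_⟩
    have h1 := hconj.inv_add_inv_eq_one
    have h2 : (p⁻¹ + q⁻¹).toReal = (1:ℝ≥0∞).toReal := by rw [h1]
    rw [ENNReal.toReal_add (ENNReal.inv_ne_top.mpr hp0) (ENNReal.inv_ne_top.mpr hq0)] at h2
    simpa [ENNReal.toReal_inv] using h2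
  have hs0 : 0 ≤ s := ht₀.trans hs
  -- measurable nonnegative representative of h
  obtain ⟨h', h'meas, h'nonneg, h'ae⟩ :
      ∃ h' : ℝ → ℝ, Measurable h' ∧ (∀ t, 0 ≤ h' t) ∧ h =ᵐ[volume] h' := by
    refine ⟨fun t => max (hmemh.1.mk h t) 0,
      hmemh.1.stronglyMeasurable_mk.measurable.max measurable_const,
      fun t => le_max_right _ _, ?_⟩
    filter_upwards [hmemh.1.ae_eq_mk] with t ht
    rw [← ht, max_eq_left (hh0 t)]
  have h'mem : MemLp h' q volume := hmemh.ae_eq h'ae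
  have h'norm : eLpNorm h' q volume ≤ 1 := by rwa [← eLpNorm_congr_ae h'ae]
  set I₀ : Set ℝ := Set.Icc t₀ (t₀ + 1) with hI₀_def
  set ν : Measure ℝ := volume.restrict I₀ with hν_def
  haveI hνfin : IsFiniteMeasure ν := by
    constructor
    rw [hν_def, Measure.restrict_apply_univ, hI₀_def, Real.volume_Icc]
    simp
  have hcont : ContinuousOn (fun τ => T τ f) I₀ :=
    (hT.2.2 f).mono (fun τ hτ => ht₀.trans hτ.1)
  obtain ⟨M, hM⟩ : ∃ M, ∀ τ ∈ I₀, ‖T τ f‖ ≤ M :=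
    isCompact_Icc.exists_bound_of_continuousOn hcont
  have h'smem : MemLp (fun τ => h' (s + τ)) q volume := by
    have := h'mem.comp_measurePreserving (measurePreserving_add_left volume s)
    exact this
  have h'sint : IntegrableOn (fun τ => h' (s + τ)) I₀ volume :=
    (h'smem.restrict I₀).integrable hq1
  have hφint : IntegrableOn (fun τ => h' (s + τ) • T τ f) I₀ volume :=
    h'sint.smul_continuousOn hcont isCompact_Icc
  set u : Lp ℝ p μ := ∫ τ in I₀, h' (s + τ) • T τ f with hu_def
  -- reduce to `u ≤ g`
  have hcongr : (∫ t in Set.Icc (s + t₀) (s + t₀ + 1), h t • T t f)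
      = ∫ t in Set.Icc (s + t₀) (s + t₀ + 1), h' t • T t f := by
    refine integral_congr_ae (ae_restrict_of_ae ?_)
    filter_upwards [h'ae] with t ht
    rw [ht]
  have hB : (∫ t in Set.Icc (s + t₀) (s + t₀ + 1), h' t • T t f)
      = ∫ τ in I₀, h' (s + τ) • T (s + τ) f := by
    have mp : MeasurePreserving (fun τ : ℝ => s + τ) volume volume :=
      measurePreserving_add_left volume s
    have emb : MeasurableEmbedding (fun τ : ℝ => s + τ) :=
      (Homeomorph.addLeft s).measurableEmbedding
    rw [← mp.setIntegral_preimage_emb emb (fun t => h' t • T t f) _]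
    have hpre : (fun τ : ℝ => s + τ) ⁻¹' Set.Icc (s + t₀) (s + t₀ + 1) = I₀ := by
      rw [hI₀_def]
      ext τ
      simp only [Set.mem_preimage, Set.mem_Icc]
      constructor <;> intro ⟨h1, h2⟩ <;> constructor <;> linarith
    rw [hpre]
  have hC : (∫ τ in I₀, h' (s + τ) • T (s + τ) f) = T s u := by
    have e1 : (∫ τ in I₀, h' (s + τ) • T (s + τ) f)
        = ∫ τ in I₀, T s (h' (s + τ) • T τ f) := by
      refine setIntegral_congr_fun measurableSet_Icc (fun τ hτ => ?_)
      rw [hT.2.1 s τ hs0 (ht₀.trans hτ.1)]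
      simp [ContinuousLinearMap.comp_apply, _root_.map_smul]
    rw [e1, hu_def]
    exact ContinuousLinearMap.integral_comp_comm (T s) hφint
  have hug : u ≤ g := by
    have hAcore : ∀ A : Set Ω, MeasurableSet A → μ A < ∞ →
        ∫ x in A, (u : Ω → ℝ) x ∂μ ≤ ∫ x in A, (g : Ω → ℝ) x ∂μ := by
      intro A hA hμA
      haveI hμAfin : IsFiniteMeasure (μ.restrict A) := ⟨by rwa [Measure.restrict_apply_univ]⟩
      obtain ⟨L, hL⟩ := aux_exists_CLM (μ := μ) hp' hμA
      set G : ℝ → Ω → ℝ := fun τ x => h' (s + τ) * F τ x with hG_def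
      have hGm : Measurable (Function.uncurry G) :=
        (h'meas.comp (measurable_fst.const_add s)).mul hFmeas
      have hFint : ∀ τ : ℝ, IntegrableOn (F τ) A μ := fun τ =>
        (aux_integrableOn (T τ f) hμA).congr (ae_restrict_of_ae (hF τ))
      have hFbound : ∀ τ ∈ I₀, ∫ x in A, ‖F τ x‖ ∂μ ≤ M * ((μ A) ^ (1 - 1 / pr)).toReal := by
        intro τ hτ
        have e : ∫ x in A, ‖F τ x‖ ∂μ = ∫ x in A, ‖(T τ f : Ω → ℝ) x‖ ∂μ := by
          refine integral_congr_ae (ae_restrict_of_ae ((hF τ).mono fun x hx => ?_))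
          exact congrArg norm hx.symm
        rw [e]
        exact le_trans (aux_setIntegral_norm_le hp' (T τ f) hμA)
          (mul_le_mul_of_nonneg_right (hM τ hτ) ENNReal.toReal_nonneg)
      have hGint : Integrable (Function.uncurry G) (ν.prod (μ.restrict A)) := by
        rw [integrable_prod_iff hGm.aestronglyMeasurable]
        constructor
        · refine Filter.Eventually.of_forall fun τ => ?_
          simpa only [Function.uncurry_apply_pair] using (hFint τ).const_mul (h' (s + τ))
        · refine Integrable.mono'
            (h'sint.mul_const (M * ((μ A) ^ (1 - 1 / pr)).toReal))
            hGm.norm.aestronglyMeasurable.integral_prod_right' ?_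
          filter_upwards [ae_restrict_mem measurableSet_Icc] with τ hτ
          have h1 : ∫ x, ‖Function.uncurry G (τ, x)‖ ∂(μ.restrict A)
              = h' (s + τ) * ∫ x in A, ‖F τ x‖ ∂μ := by
            rw [← integral_const_mul]
            refine integral_congr_ae (Filter.Eventually.of_forall fun x => ?_)
            simp [hG_def, Function.uncurry, norm_mul, abs_of_nonneg (h'nonneg _), mul_comm]
          rw [Real.norm_of_nonneg (integral_nonneg fun x => norm_nonneg _), h1]
          exact mul_le_mul_of_nonneg_left (hFbound τ hτ) (h'nonneg _)
      -- second Hölder factor is at most 1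
      have hhfac : (∫ τ, h' (s + τ) ^ qr ∂ν) ^ (1 / qr) ≤ 1 := by
        have hmeas2 : Measurable fun τ : ℝ => h' (s + τ) ^ qr :=
          (h'meas.comp (measurable_id.const_add s)).pow_const qr
        have key : ∫⁻ τ, ENNReal.ofReal (h' (s + τ) ^ qr) ∂ν ≤ 1 := by
          have le1 : ∫⁻ τ, ENNReal.ofReal (h' (s + τ) ^ qr) ∂ν
              ≤ ∫⁻ τ, ENNReal.ofReal (h' (s + τ) ^ qr) ∂volume :=
            lintegral_mono' Measure.restrict_le_self le_rfl
          have e2 : ∫⁻ τ, ENNReal.ofReal (h' (s + τ) ^ qr) ∂volume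
              = ∫⁻ t, ENNReal.ofReal (h' t ^ qr) ∂volume :=
            (measurePreserving_add_left volume s).lintegral_comp
              ((h'meas.pow_const qr).ennreal_ofReal)
          have e3 : ∫⁻ t, ENNReal.ofReal (h' t ^ qr) ∂volume
              = (eLpNorm h' q volume) ^ qr := by
            rw [eLpNorm_eq_lintegral_rpow_enorm_toReal hq0 hq_top, ← ENNReal.rpow_mul, one_div,
              inv_mul_cancel₀ hqr0.ne', ENNReal.rpow_one]
            refine lintegral_congr fun t => ?_
            rw [← ENNReal.ofReal_rpow_of_nonneg (h'nonneg t) hqr0.le,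
              ← Real.enorm_eq_ofReal (h'nonneg t)]
          calc ∫⁻ τ, ENNReal.ofReal (h' (s + τ) ^ qr) ∂ν
              ≤ ∫⁻ t, ENNReal.ofReal (h' t ^ qr) ∂volume := le1.trans (le_of_eq e2)
            _ = (eLpNorm h' q volume) ^ qr := e3
            _ ≤ 1 ^ qr := ENNReal.rpow_le_rpow h'norm hqr0.le
            _ = 1 := ENNReal.one_rpow qr
        have hle : ∫ τ, h' (s + τ) ^ qr ∂ν ≤ 1 := by
          rw [integral_eq_lintegral_of_nonneg_ae
            (Filter.Eventually.of_forall fun τ => Real.rpow_nonneg (h'nonneg _) _)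
            hmeas2.aestronglyMeasurable]
          have := ENNReal.toReal_mono ENNReal.one_ne_top key
          simpa using this
        exact Real.rpow_le_one (integral_nonneg fun τ => Real.rpow_nonneg (h'nonneg _) _)
          hle (by positivity)
      -- a.e. finiteness of the p-th moment in τ
      have hprpos : (0:ℝ) < pr := lt_trans zero_lt_one hpr1
      have hfin : ∀ᵐ x ∂(μ.restrict A), ∫⁻ τ, (‖F τ x‖₊ : ℝ≥0∞) ^ pr ∂ν < ∞ := by
        have hswapm : Measurable (Function.uncurry fun (x : Ω) (τ : ℝ) =>
            ((‖F τ x‖₊ : ℝ≥0∞)) ^ pr) :=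
          ((hFmeas.comp measurable_swap).enorm).pow_const pr
        have hswap : ∫⁻ x, (∫⁻ τ, (‖F τ x‖₊ : ℝ≥0∞) ^ pr ∂ν) ∂(μ.restrict A)
            = ∫⁻ τ, (∫⁻ x, (‖F τ x‖₊ : ℝ≥0∞) ^ pr ∂(μ.restrict A)) ∂ν :=
          lintegral_lintegral_swap hswapm.aemeasurable
        have hνuniv : ν Set.univ = 1 := by
          rw [hν_def, Measure.restrict_apply_univ, hI₀_def, Real.volume_Icc]
          norm_num
        have hbound : ∫⁻ τ, (∫⁻ x, (‖F τ x‖₊ : ℝ≥0∞) ^ pr ∂(μ.restrict A)) ∂ν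
            ≤ ENNReal.ofReal M ^ pr := by
          have hae : ∀ᵐ τ ∂ν, (∫⁻ x, (‖F τ x‖₊ : ℝ≥0∞) ^ pr ∂(μ.restrict A))
              ≤ ENNReal.ofReal M ^ pr := by
            filter_upwards [ae_restrict_mem measurableSet_Icc] with τ hτ
            have i1 : ∫⁻ x, (‖F τ x‖₊ : ℝ≥0∞) ^ pr ∂(μ.restrict A)
                ≤ ∫⁻ x, (‖F τ x‖₊ : ℝ≥0∞) ^ pr ∂μ :=
              lintegral_mono' Measure.restrict_le_self le_rfl
            have i2 : ∫⁻ x, (‖F τ x‖₊ : ℝ≥0∞) ^ pr ∂μ = (eLpNorm (F τ) p μ) ^ pr := by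
              rw [eLpNorm_eq_lintegral_rpow_enorm_toReal hp0 hp', ← ENNReal.rpow_mul, one_div,
                inv_mul_cancel₀ hprpos.ne', ENNReal.rpow_one]
              rfl
            have i3 : eLpNorm (F τ) p μ = eLpNorm (T τ f : Ω → ℝ) p μ :=
              eLpNorm_congr_ae (hF τ).symm
            have i4 : eLpNorm (T τ f : Ω → ℝ) p μ ≤ ENNReal.ofReal M := by
              rw [← ENNReal.ofReal_toReal (Lp.eLpNorm_ne_top (T τ f)), ← Lp.norm_def]
              exact ENNReal.ofReal_le_ofReal (hM τ hτ)
            calc ∫⁻ x, (‖F τ x‖₊ : ℝ≥0∞) ^ pr ∂(μ.restrict A)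
                ≤ ∫⁻ x, (‖F τ x‖₊ : ℝ≥0∞) ^ pr ∂μ := i1
              _ = (eLpNorm (F τ) p μ) ^ pr := i2
              _ ≤ ENNReal.ofReal M ^ pr := by
                  rw [i3]; exact ENNReal.rpow_le_rpow i4 hprpos.le
          calc ∫⁻ τ, (∫⁻ x, (‖F τ x‖₊ : ℝ≥0∞) ^ pr ∂(μ.restrict A)) ∂ν
              ≤ ∫⁻ _, ENNReal.ofReal M ^ pr ∂ν := lintegral_mono_ae hae
            _ = ENNReal.ofReal M ^ pr * ν Set.univ := lintegral_const _
            _ = ENNReal.ofReal M ^ pr := by rw [hνuniv, mul_one]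
        have htot : ∫⁻ x, (∫⁻ τ, (‖F τ x‖₊ : ℝ≥0∞) ^ pr ∂ν) ∂(μ.restrict A) < ∞ := by
          rw [hswap]
          exact lt_of_le_of_lt hbound
            (ENNReal.rpow_lt_top_of_nonneg hprpos.le ENNReal.ofReal_ne_top)
        exact ae_lt_top (Measurable.lintegral_prod_right'
          (((hFmeas.comp measurable_swap).enorm).pow_const pr)) htot.ne
      -- a.e. nonnegativity in τ
      have hFnn : ∀ᵐ x ∂(μ.restrict A), ∀ᵐ τ ∂ν, 0 ≤ F τ x := by
        have pre : ∀ᵐ τ ∂ν, ∀ᵐ x ∂(μ.restrict A), 0 ≤ F τ x := by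
          filter_upwards [ae_restrict_mem measurableSet_Icc] with τ hτ
          have h1 : (0 : Lp ℝ p μ) ≤ T τ f := hpos τ hτ.1 f hf
          have h2 : 0 ≤ᵐ[μ] ⇑(T τ f) := (Lp.coeFn_nonneg (T τ f)).mpr h1
          refine ae_restrict_of_ae ?_
          filter_upwards [h2, hF τ] with x hx1 hx2
          rw [← hx2]; exact hx1
        exact (Measure.ae_ae_comm (p := fun (x : Ω) (τ : ℝ) => 0 ≤ F τ x)
          (measurableSet_le measurable_const (hFmeas.comp measurable_swap))).mpr pre
      have hgA : ∀ᵐ x ∂(μ.restrict A),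
          (g : Ω → ℝ) x = (∫ t, F t x ^ pr ∂ν) ^ (1 / pr) := ae_restrict_of_ae hg
      -- pointwise Hölder
      have hHold : ∀ᵐ x ∂(μ.restrict A), ∫ τ, G τ x ∂ν ≤ (g : Ω → ℝ) x := by
        filter_upwards [hfin, hFnn, hgA] with x hx1 hx2 hx3
        have hFxm : Measurable fun τ => F τ x :=
          hFmeas.comp measurable_prodMk_right
        have hFxmem : MemLp (fun τ => F τ x) (ENNReal.ofReal pr) ν := by
          refine ⟨hFxm.aestronglyMeasurable, ?_⟩
          have hne : ENNReal.ofReal pr ≠ 0 := (ENNReal.ofReal_pos.mpr hprpos).ne'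
          rw [eLpNorm_eq_lintegral_rpow_enorm_toReal hne
            ENNReal.ofReal_ne_top, ENNReal.toReal_ofReal hprpos.le]
          exact ENNReal.rpow_lt_top_of_nonneg (by positivity) hx1.ne
        have hhs : MemLp (fun τ => h' (s + τ)) (ENNReal.ofReal qr) ν := by
          rw [hqr_def, ENNReal.ofReal_toReal hq_top]
          exact h'smem.restrict I₀
        have Hold := integral_mul_le_Lp_mul_Lq_of_nonneg hrconj hx2
          (Filter.Eventually.of_forall fun τ => h'nonneg _) hFxmem hhs
        have e0 : ∫ τ, G τ x ∂ν = ∫ τ, F τ x * h' (s + τ) ∂ν := by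
          refine integral_congr_ae (Filter.Eventually.of_forall fun τ => ?_)
          simp [hG_def, mul_comm]
        have hbase_nn : (0:ℝ) ≤ (∫ τ, F τ x ^ pr ∂ν) ^ (1 / pr) :=
          Real.rpow_nonneg (integral_nonneg_of_ae
            (hx2.mono fun τ hτ => Real.rpow_nonneg hτ _)) _
        calc ∫ τ, G τ x ∂ν = ∫ τ, F τ x * h' (s + τ) ∂ν := e0
          _ ≤ (∫ τ, F τ x ^ pr ∂ν) ^ (1 / pr) * (∫ τ, h' (s + τ) ^ qr ∂ν) ^ (1 / qr) := Hold
          _ ≤ (∫ τ, F τ x ^ pr ∂ν) ^ (1 / pr) * 1 :=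
              mul_le_mul_of_nonneg_left hhfac hbase_nn
          _ = (∫ τ, F τ x ^ pr ∂ν) ^ (1 / pr) := mul_one _
          _ = (g : Ω → ℝ) x := hx3.symm
      -- chain everything
      calc ∫ x in A, (u : Ω → ℝ) x ∂μ = L u := (hL u).symm
        _ = ∫ τ in I₀, L (h' (s + τ) • T τ f) :=
            (ContinuousLinearMap.integral_comp_comm L hφint).symm
        _ = ∫ τ, (∫ x, G τ x ∂(μ.restrict A)) ∂ν := by
            refine integral_congr_ae (Filter.Eventually.of_forall fun τ => ?_)
            show L (h' (s + τ) • T τ f) = ∫ x, G τ x ∂(μ.restrict A)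
            rw [hL]
            have e1 : ∫ x in A, ((h' (s + τ) • T τ f : Lp ℝ p μ) : Ω → ℝ) x ∂μ
                = h' (s + τ) * ∫ x in A, (T τ f : Ω → ℝ) x ∂μ := by
              rw [integral_congr_ae (ae_restrict_of_ae (Lp.coeFn_smul _ _))]
              simpa using integral_smul (h' (s + τ)) ((T τ f : Ω → ℝ))
            rw [e1, integral_congr_ae (ae_restrict_of_ae (hF τ)), ← integral_const_mul]
        _ = ∫ x, (∫ τ, G τ x ∂ν) ∂(μ.restrict A) := integral_integral_swap hGint
        _ ≤ ∫ x, (g : Ω → ℝ) x ∂(μ.restrict A) :=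
            integral_mono_ae hGint.integral_prod_right (aux_integrableOn g hμA) hHold
        _ = ∫ x in A, (g : Ω → ℝ) x ∂μ := rfl
    have hsub : 0 ≤ᵐ[μ] fun x => (g : Ω → ℝ) x - (u : Ω → ℝ) x := by
      refine AEFinStronglyMeasurable.ae_nonneg_of_forall_setIntegral_nonneg ?_ ?_ ?_
      · exact ((Lp.finStronglyMeasurable g hp0 hp').aefinStronglyMeasurable).sub
          ((Lp.finStronglyMeasurable u hp0 hp').aefinStronglyMeasurable)
      · intro A hA hμA
        exact (aux_integrableOn g hμA).sub (aux_integrableOn u hμA)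
      · intro A hA hμA
        rw [integral_sub (aux_integrableOn g hμA) (aux_integrableOn u hμA)]
        exact sub_nonneg.mpr (hAcore A hA hμA)
    have hae : (u : Ω → ℝ) ≤ᵐ[μ] (g : Ω → ℝ) := by
      filter_upwards [hsub] with x hx
      have : (0:ℝ) ≤ (g : Ω → ℝ) x - (u : Ω → ℝ) x := hx
      linarith
    exact (Lp.coeFn_le u g).mp hae
  rw [hcongr, hB, hC]
  have hTnonneg : 0 ≤ T s (g - u) := hpos s hs _ (sub_nonneg.mpr hug)
  rw [map_sub] at hTnonneg
  exact sub_nonneg.mp hTnonneg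
end

section
/- Let T be a C₀-semigroup on L_p(μ) with 1 < p < ∞ and generator A. If for every f ∈ L_p(μ) the function t ↦ ‖T(t) f‖^p is integrable on (0, ∞), then the growth bound satisfies ω₀(T) < 0. -/
open MeasureTheory ENNReal

section Aux

open Set

variable {X : Type*} [NormedAddCommGroup X] [NormedSpace ℝ X] [CompleteSpace X]

theorem datko_localBound (T : ℝ → X →L[ℝ] X) (hT : IsC0Semigroup T) (b : ℝ) :
    ∃ K : ℝ, 1 ≤ K ∧ ∀ u ∈ Icc (0:ℝ) b, ‖T u‖ ≤ K := by
  obtain ⟨C, hC⟩ := banach_steinhaus (g := fun u : Icc (0:ℝ) b => T u) (fun f => by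
    obtain ⟨C, hC⟩ := isCompact_Icc.exists_bound_of_continuousOn
      ((hT.2.2 f).mono (Icc_subset_Ici_self))
    exact ⟨C, fun u => hC u u.2⟩)
  exact ⟨max C 1, le_max_right _ _, fun u hu => le_trans (hC ⟨u, hu⟩) (le_max_left _ _)⟩

omit [CompleteSpace X] in
theorem datko_expFromContraction (T : ℝ → X →L[ℝ] X)
    (hsg : ∀ s t : ℝ, 0 ≤ s → 0 ≤ t → T (s + t) = (T s).comp (T t))
    {K t₀ : ℝ} (hK : 1 ≤ K) (hKb : ∀ t : ℝ, 0 ≤ t → ‖T t‖ ≤ K)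
    (ht₀ : 0 < t₀) (hc : ‖T t₀‖ ≤ 1/2) :
    ∃ ω : ℝ, ω < 0 ∧ ∃ M : ℝ, 1 ≤ M ∧
      ∀ t : ℝ, 0 ≤ t → ‖T t‖ ≤ M * Real.exp (ω * t) := by
  have hlog2 : (0:ℝ) < Real.log 2 := Real.log_pos one_lt_two
  refine ⟨-(Real.log 2)/t₀, div_neg_of_neg_of_pos (by linarith) ht₀, 2*K, by linarith, ?_⟩
  have key : ∀ n : ℕ, ∀ t : ℝ, (n : ℝ) * t₀ ≤ t → ‖T t‖ ≤ K * (1/2)^n := by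
    intro n
    induction n with
    | zero => intro t ht; simpa using hKb t (by simpa using ht)
    | succ n ih =>
      intro t ht
      have h1 : (n:ℝ) * t₀ ≤ t - t₀ := by push_cast at ht ⊢; nlinarith
      have h2 : 0 ≤ t - t₀ := le_trans (by positivity) h1
      have := hsg (t - t₀) t₀ h2 ht₀.le
      rw [sub_add_cancel] at this
      calc ‖T t‖ = ‖(T (t-t₀)).comp (T t₀)‖ := by rw [this]
        _ ≤ ‖T (t-t₀)‖ * ‖T t₀‖ := ContinuousLinearMap.opNorm_comp_le _ _
        _ ≤ (K * (1/2)^n) * (1/2) := by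
            apply mul_le_mul (ih _ h1) hc (norm_nonneg _)
            positivity
        _ = K * (1/2)^(n+1) := by ring
  intro t ht
  set n : ℕ := ⌊t / t₀⌋₊ with hn
  have hnt : (n : ℝ) * t₀ ≤ t := by
    rw [hn]
    calc (⌊t / t₀⌋₊ : ℝ) * t₀ ≤ (t/t₀) * t₀ := by
          apply mul_le_mul_of_nonneg_right (Nat.floor_le (by positivity)) ht₀.le
      _ = t := by field_simp
  have hnt2 : t < ((n:ℝ)+1) * t₀ := by
    have := Nat.lt_floor_add_one (t / t₀)
    calc t = (t/t₀)*t₀ := by field_simp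
      _ < ((n:ℝ)+1) * t₀ := by apply mul_lt_mul_of_pos_right _ ht₀; exact_mod_cast this
  have hhalf : (1/2:ℝ)^n ≤ 2 * Real.exp (-(Real.log 2)/t₀ * t) := by
    have e1 : (1/2:ℝ)^n = Real.exp ((n:ℝ) * (-Real.log 2)) := by
      rw [Real.exp_nat_mul, Real.exp_neg, Real.exp_log two_pos, one_div]
    have e2 : (2:ℝ) * Real.exp (-(Real.log 2)/t₀ * t)
        = Real.exp (Real.log 2 + -(Real.log 2)/t₀ * t) := by
      rw [Real.exp_add, Real.exp_log two_pos]
    rw [e1, e2]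
    apply Real.exp_le_exp.mpr
    have h3 : -(((n:ℝ)+1) * Real.log 2) ≤ (-(Real.log 2)/t₀) * t := by
      rw [div_mul_eq_mul_div, le_div_iff₀ ht₀]
      nlinarith
    linarith
  calc ‖T t‖ ≤ K * (1/2)^n := key n t hnt
    _ ≤ K * (2 * Real.exp (-(Real.log 2)/t₀ * t)) := by
        apply mul_le_mul_of_nonneg_left hhalf (by linarith)
    _ = 2*K * Real.exp (-(Real.log 2)/t₀ * t) := by ring

end Aux

open Set

set_option maxHeartbeats 2000000 in
/-- Datko's theorem in the form used in the paper. If `T` is a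
`C₀`-semigroup on `L_p(μ)`, `1 < p < ∞`, such that `t ↦ ‖T(t)f‖^p` is integrable on
`(0, ∞)` for every `f`, then `ω₀(T) < 0`, i.e. there are `ω < 0` and `M ≥ 1` with
`‖T(t)‖ ≤ M e^{ωt}` for all `t ≥ 0`. -/
theorem stmt8 {Ω : Type*} [MeasurableSpace Ω] (μ : Measure Ω)
    {p : ℝ≥0∞} [Fact (1 ≤ p)] (hp : 1 < p) (hp' : p ≠ ⊤)
    (T : ℝ → Lp ℝ p μ →L[ℝ] Lp ℝ p μ) (hT : IsC0Semigroup T)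
    (hint : ∀ f : Lp ℝ p μ,
      IntegrableOn (fun t : ℝ => ‖T t f‖ ^ p.toReal) (Set.Ioi 0) volume) :
    ∃ ω : ℝ, ω < 0 ∧ ∃ M : ℝ, 1 ≤ M ∧
      ∀ t : ℝ, 0 ≤ t → ‖T t‖ ≤ M * Real.exp (ω * t) := by
  obtain ⟨hT0, hsg, horb⟩ := hT
  have hp0 : p ≠ 0 := (one_pos.trans hp).ne'
  set pr : ℝ := p.toReal with hprdef
  have hpr_pos : 0 < pr := ENNReal.toReal_pos hp0 hp'
  -- the orbit norm functions
  set N : Lp ℝ p μ → ℝ → ℝ := fun f s => ‖T s f‖ with hNdef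
  have hNcont : ∀ f, ContinuousOn (N f) (Ici 0) := fun f => (horb f).norm
  have hNmeas : ∀ (f : Lp ℝ p μ) (s : Set ℝ), MeasurableSet s → s ⊆ Ici 0 →
      AEStronglyMeasurable (N f) (volume.restrict s) := fun f s hs hsub =>
    ((hNcont f).mono hsub).aestronglyMeasurable hs
  -- membership in Lp over (0,∞) from the integrability hypothesis
  have hmemIoi : ∀ f, MemLp (N f) p (volume.restrict (Ioi 0)) := by
    intro f
    refine (memLp_norm_rpow_iff (q := p)
      (hNmeas f _ measurableSet_Ioi Ioi_subset_Ici_self) hp0 hp').mp ?_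
    rw [ENNReal.div_self hp0 hp', memLp_one_iff_integrable]
    have : (fun x => ‖N f x‖ ^ p.toReal) = fun t => ‖T t f‖ ^ p.toReal := by
      funext x; rw [norm_norm]
    rw [this]
    exact hint f
  have hfinIoi : ∀ f, eLpNorm (N f) p (volume.restrict (Ioi 0)) ≠ ⊤ :=
    fun f => (hmemIoi f).2.ne
  have hfinIoc : ∀ (f : Lp ℝ p μ) (n : ℕ),
      eLpNorm (N f) p (volume.restrict (Ioc 0 (n:ℝ))) ≠ ⊤ := fun f n =>
    (lt_of_le_of_lt (eLpNorm_mono_measure _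
      (Measure.restrict_mono (fun x hx => hx.1) le_rfl)) (hmemIoi f).2).ne
  -- local operator-norm bounds
  choose Kn hKn1 hKnB using fun n : ℕ => datko_localBound T ⟨hT0, hsg, horb⟩ n
  -- the seminorms q n
  have hqex : ∃ q : ℕ → Seminorm ℝ (Lp ℝ p μ), ∀ n f,
      q n f = (eLpNorm (N f) p (volume.restrict (Ioc (0:ℝ) (n:ℝ)))).toReal := by
    refine ⟨fun n => Seminorm.of
      (fun f => (eLpNorm (N f) p (volume.restrict (Ioc (0:ℝ) (n:ℝ)))).toReal)
      ?_ ?_, fun n f => rfl⟩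
    · intro f g
      have h1 : eLpNorm (N (f+g)) p (volume.restrict (Ioc (0:ℝ) (n:ℝ)))
          ≤ eLpNorm (N f) p (volume.restrict (Ioc (0:ℝ) (n:ℝ)))
            + eLpNorm (N g) p (volume.restrict (Ioc (0:ℝ) (n:ℝ))) := by
        refine le_trans (eLpNorm_mono (f := N (f+g)) (g := N f + N g) fun s => ?_)
          (eLpNorm_add_le (p := p) (hNmeas f _ measurableSet_Ioc (fun x hx => hx.1.le))
            (hNmeas g _ measurableSet_Ioc (fun x hx => hx.1.le)) (Fact.out : 1 ≤ p))
        simp only [hNdef, Pi.add_apply]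
        rw [Real.norm_eq_abs, Real.norm_eq_abs, abs_of_nonneg (norm_nonneg _),
          abs_of_nonneg (by positivity)]
        simpa [map_add] using norm_add_le (T s f) (T s g)
      have h2 := ENNReal.toReal_mono
        (ENNReal.add_ne_top.mpr ⟨hfinIoc f n, hfinIoc g n⟩) h1
      rwa [ENNReal.toReal_add (hfinIoc f n) (hfinIoc g n)] at h2
    · intro c f
      have hNs : N (c • f) = (‖c‖ : ℝ) • (N f) := by
        funext s
        simp only [hNdef, Pi.smul_apply, smul_eq_mul]
        rw [(T s).map_smul, norm_smul]
      rw [hNs, eLpNorm_const_smul, ENNReal.toReal_mul]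
      norm_num
  obtain ⟨q, hq_apply⟩ := hqex
  -- each q n is continuous
  have hqcont : ∀ n, Continuous (q n) := by
    intro n
    set Cn : ℝ := ((volume (Ioc (0:ℝ) (n:ℝ))) ^ p.toReal⁻¹).toReal * Kn n with hCn
    have hbound : ∀ f, q n f ≤ Cn * ‖f‖ := by
      intro f
      have hae : ∀ᵐ s ∂(volume.restrict (Ioc (0:ℝ) (n:ℝ))), ‖N f s‖ ≤ Kn n * ‖f‖ := by
        refine (ae_restrict_iff' measurableSet_Ioc).mpr (ae_of_all _ fun s hs => ?_)
        rw [hNdef, norm_norm]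
        calc ‖T s f‖ ≤ ‖T s‖ * ‖f‖ := (T s).le_opNorm f
          _ ≤ Kn n * ‖f‖ := by
              apply mul_le_mul_of_nonneg_right (hKnB n s ⟨hs.1.le, hs.2⟩) (norm_nonneg _)
      have h1 := eLpNorm_le_of_ae_bound (p := p) hae
      rw [Measure.restrict_apply_univ] at h1
      have hfin1 : (volume (Ioc (0:ℝ) (n:ℝ))) ^ p.toReal⁻¹ ≠ ⊤ :=
        ENNReal.rpow_ne_top_of_nonneg (by positivity) (by simp [Real.volume_Ioc])
      have h2 := ENNReal.toReal_mono
        (by exact ENNReal.mul_ne_top hfin1 ENNReal.ofReal_ne_top) h1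
      rw [hq_apply n f]
      rw [ENNReal.toReal_mul, ENNReal.toReal_ofReal
        (mul_nonneg (by linarith [hKn1 n]) (norm_nonneg f))] at h2
      calc (eLpNorm (N f) p (volume.restrict (Ioc (0:ℝ) (n:ℝ)))).toReal
          ≤ ((volume (Ioc (0:ℝ) (n:ℝ))) ^ p.toReal⁻¹).toReal * (Kn n * ‖f‖) := h2
        _ = Cn * ‖f‖ := by rw [hCn]; ring
    have hCn0 : 0 ≤ Cn := by
      rw [hCn]
      exact mul_nonneg ENNReal.toReal_nonneg (by linarith [hKn1 n])
    refine (LipschitzWith.of_dist_le_mul (K := Cn.toNNReal) (f := ⇑(q n)) ?_).continuous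
    intro f g
    rw [Real.dist_eq, dist_eq_norm, Real.coe_toNNReal _ hCn0]
    calc |q n f - q n g| ≤ q n (f - g) := by
          simpa [Real.norm_eq_abs] using (q n).norm_sub_map_le_sub f g
      _ ≤ Cn * ‖f - g‖ := hbound _
  -- the family is pointwise bounded
  have hbdd : BddAbove (Set.range q) := by
    rw [Seminorm.bddAbove_range_iff]
    intro f
    refine ⟨(eLpNorm (N f) p (volume.restrict (Ioi 0))).toReal, ?_⟩
    rintro r ⟨n, rfl⟩
    show q n f ≤ _
    rw [hq_apply n f]
    exact ENNReal.toReal_mono (hfinIoi f)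
      (eLpNorm_mono_measure _ (Measure.restrict_mono (fun x hx => hx.1) le_rfl))
  -- Banach–Steinhaus via barrelledness: the supremum seminorm is continuous
  have hQc : Continuous ⇑(⨆ n, q n) := by
    rw [Seminorm.coe_iSup_eq hbdd]
    exact Seminorm.continuous_iSup q hqcont hbdd
  obtain ⟨C₀, hC₀pos, hC₀⟩ := Seminorm.bound_of_continuous_normedSpace _ hQc
  set C : ℝ := max C₀ 1 with hCdef
  have hC1 : 1 ≤ C := le_max_right _ _
  have hqC : ∀ n f, q n f ≤ C * ‖f‖ := by
    intro n f
    calc q n f ≤ (⨆ n, q n) f := Seminorm.le_def.mp (le_ciSup hbdd n) f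
      _ ≤ C₀ * ‖f‖ := hC₀ f
      _ ≤ C * ‖f‖ := mul_le_mul_of_nonneg_right (le_max_left _ _) (norm_nonneg _)
  -- rephrase as a lintegral bound
  set G : Lp ℝ p μ → ℝ → ℝ≥0∞ := fun f s => (ENNReal.ofReal ‖T s f‖) ^ pr with hGdef
  set B : Lp ℝ p μ → ℝ≥0∞ := fun f => ENNReal.ofReal (C * ‖f‖) with hBdef
  have hGn : ∀ (n : ℕ) f, ∫⁻ s in Ioc (0:ℝ) (n:ℝ), G f s ≤ (B f) ^ pr := by
    intro n f
    have hqCf := hqC n f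
    rw [hq_apply n f] at hqCf
    have he : eLpNorm (N f) p (volume.restrict (Ioc (0:ℝ) (n:ℝ))) ≤ B f :=
      (ENNReal.le_ofReal_iff_toReal_le (hfinIoc f n)
        (mul_nonneg (by linarith : (0:ℝ) ≤ C) (norm_nonneg f))).mpr hqCf
    rw [eLpNorm_eq_lintegral_rpow_enorm_toReal hp0 hp'] at he
    have hrw : ∀ s : ℝ, ‖N f s‖ₑ ^ pr = G f s := fun s => by
      simp only [hNdef, hGdef, enorm_norm]
      rw [← ofReal_norm_eq_enorm]
    simp only [← hprdef, hrw] at he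
    calc ∫⁻ s in Ioc (0:ℝ) (n:ℝ), G f s
        = ((∫⁻ s in Ioc (0:ℝ) (n:ℝ), G f s) ^ (1/pr)) ^ pr := by
          rw [← ENNReal.rpow_mul, one_div, inv_mul_cancel₀ hpr_pos.ne', ENNReal.rpow_one]
      _ ≤ (B f) ^ pr := ENNReal.rpow_le_rpow he hpr_pos.le
  have hGIoi : ∀ f, ∫⁻ s in Ioi (0:ℝ), G f s ≤ (B f) ^ pr := by
    intro f
    have hU : Ioi (0:ℝ) = ⋃ n : ℕ, Ioc (0:ℝ) (n:ℝ) := by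
      ext x
      simp only [mem_Ioi, mem_iUnion, mem_Ioc]
      exact ⟨fun hx => (exists_nat_ge x).imp (fun n hn => ⟨hx, hn⟩), fun ⟨n, hn, _⟩ => hn⟩
    have hdir : Directed (· ⊆ ·) (fun n : ℕ => Ioc (0:ℝ) (n:ℝ)) := by
      have hm : Monotone (fun n : ℕ => Ioc (0:ℝ) (n:ℝ)) := fun a b hab =>
        Ioc_subset_Ioc le_rfl (by exact_mod_cast hab)
      exact hm.directed_le
    rw [hU, setLIntegral_iUnion_of_directed _ hdir]
    exact iSup_le fun n => hGn n f
  -- uniform bound on the whole semigroup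
  obtain ⟨K₁, hK₁1, hK₁⟩ := datko_localBound T ⟨hT0, hsg, horb⟩ 1
  have hK₁0 : (0:ℝ) ≤ K₁ := by linarith
  have hC0 : (0:ℝ) ≤ C := by linarith
  have hbig : ∀ t : ℝ, 1 ≤ t → ∀ f, ‖T t f‖ ≤ (K₁ * C) * ‖f‖ := by
    intro t ht f
    have hpoint : ∀ s ∈ Ioc (t-1) t,
        (ENNReal.ofReal ‖T t f‖) ^ pr ≤ (ENNReal.ofReal K₁) ^ pr * G f s := by
      intro s hs
      have h0s : (0:ℝ) ≤ s := by linarith [hs.1]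
      have hts : t - s ∈ Icc (0:ℝ) 1 := ⟨by linarith [hs.2], by linarith [hs.1]⟩
      have hTts : T t f = T (t-s) (T s f) := by
        have h := hsg (t-s) s hts.1 h0s
        rw [sub_add_cancel] at h
        rw [h]; rfl
      have hnorm : ‖T t f‖ ≤ K₁ * ‖T s f‖ := by
        rw [hTts]
        exact le_trans ((T (t-s)).le_opNorm _)
          (mul_le_mul_of_nonneg_right (hK₁ _ hts) (norm_nonneg _))
      calc (ENNReal.ofReal ‖T t f‖) ^ pr
          ≤ (ENNReal.ofReal (K₁ * ‖T s f‖)) ^ pr :=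
            ENNReal.rpow_le_rpow (ENNReal.ofReal_le_ofReal hnorm) hpr_pos.le
        _ = (ENNReal.ofReal K₁) ^ pr * G f s := by
            rw [ENNReal.ofReal_mul hK₁0, ENNReal.mul_rpow_of_nonneg _ _ hpr_pos.le]
    have key : (ENNReal.ofReal ‖T t f‖) ^ pr ≤ (ENNReal.ofReal (K₁ * (C * ‖f‖))) ^ pr := by
      calc (ENNReal.ofReal ‖T t f‖) ^ pr
          = ∫⁻ _ in Ioc (t-1) t, (ENNReal.ofReal ‖T t f‖) ^ pr := by
            rw [setLIntegral_const, Real.volume_Ioc, (by ring : t - (t-1) = 1),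
              ENNReal.ofReal_one, mul_one]
        _ ≤ ∫⁻ s in Ioc (t-1) t, (ENNReal.ofReal K₁) ^ pr * G f s :=
            lintegral_mono_ae ((ae_restrict_iff' measurableSet_Ioc).mpr (ae_of_all _ hpoint))
        _ = (ENNReal.ofReal K₁) ^ pr * ∫⁻ s in Ioc (t-1) t, G f s :=
            lintegral_const_mul' _ _ (ENNReal.rpow_ne_top_of_nonneg hpr_pos.le
              ENNReal.ofReal_ne_top)
        _ ≤ (ENNReal.ofReal K₁) ^ pr * ∫⁻ s in Ioi (0:ℝ), G f s := by
            have h : ∫⁻ s in Ioc (t-1) t, G f s ≤ ∫⁻ s in Ioi (0:ℝ), G f s :=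
              lintegral_mono_set (fun x hx => lt_of_le_of_lt (by linarith) hx.1)
            gcongr
        _ ≤ (ENNReal.ofReal K₁) ^ pr * (B f) ^ pr := by
            have h := hGIoi f
            gcongr
        _ = (ENNReal.ofReal (K₁ * (C * ‖f‖))) ^ pr := by
            rw [hBdef, ← ENNReal.mul_rpow_of_nonneg _ _ hpr_pos.le,
              ← ENNReal.ofReal_mul hK₁0]
    have h1 := (ENNReal.rpow_le_rpow_iff hpr_pos).mp key
    have h2 := (ENNReal.ofReal_le_ofReal_iff
      (mul_nonneg hK₁0 (mul_nonneg hC0 (norm_nonneg f)))).mp h1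
    calc ‖T t f‖ ≤ K₁ * (C * ‖f‖) := h2
      _ = (K₁ * C) * ‖f‖ := by ring
  set K : ℝ := K₁ * C with hKdef
  have hK1 : 1 ≤ K := by rw [hKdef]; nlinarith
  have hK0 : (0:ℝ) ≤ K := by linarith
  have hKglob : ∀ t : ℝ, 0 ≤ t → ‖T t‖ ≤ K := by
    intro t ht
    rcases le_or_gt t 1 with h1 | h1
    · calc ‖T t‖ ≤ K₁ := hK₁ t ⟨ht, h1⟩
        _ ≤ K := by nlinarith
    · exact ContinuousLinearMap.opNorm_le_bound _ hK0 (hbig t h1.le)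
  -- the contraction time
  set t₀ : ℝ := (2 * (K * C)) ^ pr with ht₀def
  have hKC0 : (0:ℝ) < 2 * (K * C) := by nlinarith
  have ht₀pos : 0 < t₀ := Real.rpow_pos_of_pos hKC0 pr
  have hdecay : ∀ f : Lp ℝ p μ, ‖T t₀ f‖ ≤ (1/2) * ‖f‖ := by
    intro f
    have hpoint : ∀ s ∈ Ioc (0:ℝ) t₀,
        (ENNReal.ofReal ‖T t₀ f‖) ^ pr ≤ (ENNReal.ofReal K) ^ pr * G f s := by
      intro s hs
      have hts : (0:ℝ) ≤ t₀ - s := by linarith [hs.2]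
      have hTts : T t₀ f = T (t₀-s) (T s f) := by
        have h := hsg (t₀-s) s hts hs.1.le
        rw [sub_add_cancel] at h
        rw [h]; rfl
      have hnorm : ‖T t₀ f‖ ≤ K * ‖T s f‖ := by
        rw [hTts]
        exact le_trans ((T (t₀-s)).le_opNorm _)
          (mul_le_mul_of_nonneg_right (hKglob _ hts) (norm_nonneg _))
      calc (ENNReal.ofReal ‖T t₀ f‖) ^ pr
          ≤ (ENNReal.ofReal (K * ‖T s f‖)) ^ pr :=
            ENNReal.rpow_le_rpow (ENNReal.ofReal_le_ofReal hnorm) hpr_pos.le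
        _ = (ENNReal.ofReal K) ^ pr * G f s := by
            rw [ENNReal.ofReal_mul hK0, ENNReal.mul_rpow_of_nonneg _ _ hpr_pos.le]
    have key : (ENNReal.ofReal (‖T t₀ f‖ * (2 * (K * C)))) ^ pr
        ≤ (ENNReal.ofReal (K * (C * ‖f‖))) ^ pr := by
      calc (ENNReal.ofReal (‖T t₀ f‖ * (2 * (K * C)))) ^ pr
          = (ENNReal.ofReal ‖T t₀ f‖) ^ pr * ENNReal.ofReal t₀ := by
            rw [ENNReal.ofReal_mul (norm_nonneg _),
              ENNReal.mul_rpow_of_nonneg _ _ hpr_pos.le, ht₀def,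
              ENNReal.ofReal_rpow_of_nonneg hKC0.le hpr_pos.le]
        _ = ∫⁻ _ in Ioc (0:ℝ) t₀, (ENNReal.ofReal ‖T t₀ f‖) ^ pr := by
            rw [setLIntegral_const, Real.volume_Ioc, sub_zero]
        _ ≤ ∫⁻ s in Ioc (0:ℝ) t₀, (ENNReal.ofReal K) ^ pr * G f s :=
            lintegral_mono_ae ((ae_restrict_iff' measurableSet_Ioc).mpr (ae_of_all _ hpoint))
        _ = (ENNReal.ofReal K) ^ pr * ∫⁻ s in Ioc (0:ℝ) t₀, G f s :=
            lintegral_const_mul' _ _ (ENNReal.rpow_ne_top_of_nonneg hpr_pos.le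
              ENNReal.ofReal_ne_top)
        _ ≤ (ENNReal.ofReal K) ^ pr * ∫⁻ s in Ioi (0:ℝ), G f s := by
            have h : ∫⁻ s in Ioc (0:ℝ) t₀, G f s ≤ ∫⁻ s in Ioi (0:ℝ), G f s :=
              lintegral_mono_set (fun x hx => hx.1)
            gcongr
        _ ≤ (ENNReal.ofReal K) ^ pr * (B f) ^ pr := by
            have h := hGIoi f
            gcongr
        _ = (ENNReal.ofReal (K * (C * ‖f‖))) ^ pr := by
            rw [hBdef, ← ENNReal.mul_rpow_of_nonneg _ _ hpr_pos.le,
              ← ENNReal.ofReal_mul hK0]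
    have h1 := (ENNReal.rpow_le_rpow_iff hpr_pos).mp key
    have h2 := (ENNReal.ofReal_le_ofReal_iff
      (mul_nonneg hK0 (mul_nonneg hC0 (norm_nonneg f)))).mp h1
    -- ‖T t₀ f‖ * (2 * (K * C)) ≤ K * (C * ‖f‖)
    nlinarith [norm_nonneg (T t₀ f), norm_nonneg f]
  have hcontr : ‖T t₀‖ ≤ 1/2 :=
    ContinuousLinearMap.opNorm_le_bound _ (by norm_num) hdecay
  exact datko_expFromContraction T hsg hK1 hKglob ht₀pos hcontr
end
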